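/- The following Hermite reduction of a genus-2 hyperelliptic integral holds: (5/14)·√(7/3 + √(7/3)) · K((1/7)·√((49 − 9√21)/2)) = F_D^{(4)}(1/2; 1/2, 1/2, 1/2, 1/2; 3/2 | (3√21 − 17)/25, (3 − √21)/12, (√21 − 3)/3, (11 − √21)/25). -/

import Mathlib

open MeasureTheory

noncomputable def lauricellaFD (n : ℕ) (a : ℂ) (b : Fin n → ℂ) (c : ℂ) (x : Fin n → ℂ) : ℂ :=
  (Complex.Gamma c / (Complex.Gamma a * Complex.Gamma (c - a))) *
    ∫ u in (0:ℝ)..1, (u : ℂ) ^ (a - 1) * ((1 : ℂ) - u) ^ (c - a - 1) *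
      ∏ k, ((1 : ℂ) - x k * u) ^ (-(b k))

noncomputable def appellF1 (a b₁ b₂ c x₁ x₂ : ℂ) : ℂ :=
  lauricellaFD 2 a ![b₁, b₂] c ![x₁, x₂]

noncomputable def ellipticK (k : ℝ) : ℝ :=
  ∫ θ in (0:ℝ)..(Real.pi/2), (1 - k ^ 2 * Real.sin θ ^ 2) ^ (-(1:ℝ)/2)

namespace HermiteAux

open Real Set MeasureTheory


noncomputable def k2 : ℝ := (49 - 9*Real.sqrt 21)/98
noncomputable def Nf (v : ℝ) : ℝ :=
  ((147 - 21*Real.sqrt 21)*v + ((441 - 105*Real.sqrt 21)/2)*v^2 + (-196 + 42*Real.sqrt 21)*v^3)/25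
noncomputable def Nd (v : ℝ) : ℝ :=
  ((147 - 21*Real.sqrt 21) + (441 - 105*Real.sqrt 21)*v + 3*(-196 + 42*Real.sqrt 21)*v^2)/25
noncomputable def Df (v : ℝ) : ℝ := 1 + k2 * Nf v
noncomputable def gf (v : ℝ) : ℝ := Nf v / Df v
noncomputable def Pf (v : ℝ) : ℝ :=
  (1 - (3*Real.sqrt 21 - 17)/25 * v) * ((1 - (3 - Real.sqrt 21)/12 * v) *
    ((1 - (Real.sqrt 21 - 3)/3 * v) * (1 - (11 - Real.sqrt 21)/25 * v)))

lemma hs : Real.sqrt 21 ^ 2 = 21 := Real.sq_sqrt (by norm_num)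

lemma s_lb : (4.5:ℝ) < Real.sqrt 21 := by
  nlinarith [hs, Real.sqrt_nonneg 21]

lemma s_ub : Real.sqrt 21 < 4.6 := by
  nlinarith [hs, Real.sqrt_nonneg 21]

lemma Ppos {v : ℝ} (h0 : 0 ≤ v) (h1 : v ≤ 1) : 0 < Pf v := by
  have l := s_lb; have u := s_ub
  unfold Pf
  have f1 : 0 < 1 - (3*Real.sqrt 21 - 17)/25 * v := by nlinarith
  have f2 : 0 < 1 - (3 - Real.sqrt 21)/12 * v := by nlinarith
  have f3 : 0 < 1 - (Real.sqrt 21 - 3)/3 * v := by nlinarith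
  have f4 : 0 < 1 - (11 - Real.sqrt 21)/25 * v := by nlinarith
  positivity

lemma Nnonneg {v : ℝ} (h0 : 0 ≤ v) (h1 : v ≤ 1) : 0 ≤ Nf v := by
  have l := s_lb; have u := s_ub
  unfold Nf
  nlinarith [mul_nonneg h0 h0, mul_nonneg (mul_nonneg h0 h0) h0]

lemma Npos {v : ℝ} (h0 : 0 < v) (h1 : v ≤ 1) : 0 < Nf v := by
  have l := s_lb; have u := s_ub
  unfold Nf
  nlinarith [mul_pos h0 h0, mul_pos (mul_pos h0 h0) h0]

lemma k2pos : 0 < k2 := by have := s_ub; unfold k2; nlinarith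

lemma k2lt1 : k2 < 1 := by have := s_lb; unfold k2; nlinarith

lemma Dpos {v : ℝ} (h0 : 0 ≤ v) (h1 : v ≤ 1) : 0 < Df v := by
  have := Nnonneg h0 h1; have := k2pos; unfold Df; nlinarith

lemma NdFact (v : ℝ) : Nd v = ((126*Real.sqrt 21 - 588)/25) * ((v-1) * (v + (5+Real.sqrt 21)/2)) := by
  unfold Nd
  linear_combination ((63/25 : ℝ) + (-63/25 : ℝ) * v) * hs

lemma Ndpos {v : ℝ} (h0 : 0 ≤ v) (h1 : v < 1) : 0 < Nd v := by
  have l := s_lb; have u := s_ub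
  rw [NdFact]
  have c1 : (126*Real.sqrt 21 - 588)/25 < 0 := by nlinarith
  have c2 : (v-1) * (v + (5+Real.sqrt 21)/2) < 0 := by nlinarith
  exact mul_pos_of_neg_of_neg c1 c2

lemma DNfact (v : ℝ) : Df v - Nf v
    = ((17 - 3*Real.sqrt 21)/25) * ((v-1)^2 * (v + (17 + 3*Real.sqrt 21)/4)) := by
  unfold Df Nf k2
  linear_combination ((9/100 : ℝ) + (-18/175 : ℝ) * v + (99/350 : ℝ) * v^2 + (-27/175 : ℝ) * v^3) * hs

lemma DNpos {v : ℝ} (h0 : 0 ≤ v) (h1 : v < 1) : 0 < Df v - Nf v := by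
  have l := s_lb; have u := s_ub
  rw [DNfact]
  have c1 : 0 < (17 - 3*Real.sqrt 21)/25 := by nlinarith
  have c2 : 0 < (v-1)^2 * (v + (17 + 3*Real.sqrt 21)/4) := by nlinarith [sq_nonneg (v-1)]
  positivity

lemma N1D1 : Nf 1 = Df 1 := by
  have := DNfact 1; simp at this; linarith

lemma hkey {v : ℝ} : (25*(7+Real.sqrt 21)/588) * (v*(Nd v^2 * Pf v))
    = Nf v * ((Df v - Nf v) * Df v) := by
  simp only [Nd, Pf, Df, Nf, k2]
  linear_combination ((-21/100 : ℝ) * v + (3/100 : ℝ) * v * Real.sqrt 21 + (-30051/10000 : ℝ) * v^2 + (2643/5000 : ℝ) * v^2 * Real.sqrt 21 + (-99/10000 : ℝ) * v^2 * Real.sqrt 21^2 + (-180397/30000 : ℝ) * v^3 + (1811491/750000 : ℝ) * v^3 * Real.sqrt 21 + (-148151/750000 : ℝ) * v^3 * Real.sqrt 21^2 + (24263/5250000 : ℝ) * v^3 * Real.sqrt 21^3 + (25137/15625 : ℝ) * v^4 + (278747/125000 : ℝ) * v^4 * Real.sqrt 21 + (-558803/750000 : ℝ) * v^4 * Real.sqrt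 21^2 + (2773/87500 : ℝ) * v^4 * Real.sqrt 21^3 + (77/750000 : ℝ) * v^4 * Real.sqrt 21^4 + (-93639/50000 : ℝ) * v^5 + (52703/250000 : ℝ) * v^5 * Real.sqrt 21 + (-6263/37500 : ℝ) * v^5 * Real.sqrt 21^2 + (55973/1312500 : ℝ) * v^5 * Real.sqrt 21^3 + (227/250000 : ℝ) * v^5 * Real.sqrt 21^4 + (1/250000 : ℝ) * v^5 * Real.sqrt 21^5 + (4345173/500000 : ℝ) * v^6 + (-2184469/500000 : ℝ) * v^6 * Real.sqrt 21 + (1170371/1500000 : ℝ) * v^6 * Real.sqrt 21^2 + (-114503/2100000 : ℝ) * v^6 * Real.sqrt 21^3 + (13/50000 : ℝ) * v^6 * Real.sqrt 21^4 + (1/25000 : ℝ) * v^6 * Real.sqrt 21^5 + (2096857/250000 : ℝ) * v^7 + (-1519161/250000 : ℝ) * v^7 * Real.sqrt 21 + (479539/375000 : ℝ) * v^7 * Real.sqrt 21^2 + (-783/17500 : ℝ) * v^7 * Real.sqrt 21^3 + (-5441/750000 : ℝ) * v^7 * Real.sqrt 21^4 + (13/250000 : ℝ) * v^7 * Real.sqrt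 21^5 + (-101577/6250 : ℝ) * v^8 + (603099/62500 : ℝ) * v^8 * Real.sqrt 21 + (-64891/37500 : ℝ) * v^8 * Real.sqrt 21^2 + (15793/328125 : ℝ) * v^8 * Real.sqrt 21^3 + (599/62500 : ℝ) * v^8 * Real.sqrt 21^4 + (-3/12500 : ℝ) * v^8 * Real.sqrt 21^5 + (241423/46875 : ℝ) * v^9 + (-139342/46875 : ℝ) * v^9 * Real.sqrt 21 + (96631/187500 : ℝ) * v^9 * Real.sqrt 21^2 + (-4791/437500 : ℝ) * v^9 * Real.sqrt 21^3 + (-9/2500 : ℝ) * v^9 * Real.sqrt 21^4 + (9/62500 : ℝ) * v^9 * Real.sqrt 21^5) * hs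


lemma rpow_neg_half {x : ℝ} (hx : 0 ≤ x) : x ^ (-(1:ℝ)/2) = (Real.sqrt x)⁻¹ := by
  rw [show (-(1:ℝ)/2) = -(1/2 : ℝ) by norm_num, Real.rpow_neg hx, ← Real.sqrt_eq_rpow]

lemma eq_of_sq {a b : ℝ} (ha : 0 ≤ a) (hb : 0 ≤ b) (h : a^2 = b^2) : a = b := by
  apply le_antisymm <;> nlinarith

lemma hNder (v : ℝ) : HasDerivAt Nf (Nd v) v := by
  have h1 : HasDerivAt (fun v:ℝ => (147 - 21*Real.sqrt 21)*v + ((441 - 105*Real.sqrt 21)/2)*v^2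
      + (-196 + 42*Real.sqrt 21)*v^3)
      ((147 - 21*Real.sqrt 21) + ((441 - 105*Real.sqrt 21)/2)*(2*v^(2-1))
        + (-196 + 42*Real.sqrt 21)*(3*v^(3-1))) v := by
    exact (((hasDerivAt_id v).const_mul _).add ((hasDerivAt_pow 2 v).const_mul _)).add
      ((hasDerivAt_pow 3 v).const_mul _) |>.congr_deriv (by push_cast; ring)
  have := h1.div_const 25
  refine this.congr_deriv ?_
  simp only [Nd]; push_cast; ring

lemma hDder (v : ℝ) : HasDerivAt Df (k2 * Nd v) v := ((hNder v).const_mul k2).const_add 1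

lemma hgder {v : ℝ} (h0 : 0 ≤ v) (h1 : v ≤ 1) : HasDerivAt gf (Nd v / (Df v)^2) v := by
  have h := (hNder v).div (hDder v) (ne_of_gt (Dpos h0 h1))
  refine h.congr_deriv ?_
  have : Nd v * Df v - Nf v * (k2 * Nd v) = Nd v := by simp only [Df]; ring
  rw [this]

lemma Ncont : Continuous Nf := by unfold Nf; continuity

lemma Dcont : Continuous Df := by unfold Df; exact continuous_const.add (continuous_const.mul Ncont)

lemma gcont : ContinuousOn gf (Icc 0 1) :=
  Ncont.continuousOn.div Dcont.continuousOn (fun x hx => ne_of_gt (Dpos hx.1 hx.2))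

lemma gmono : StrictMonoOn gf (Icc 0 1) := by
  apply strictMonoOn_of_deriv_pos (convex_Icc 0 1) gcont
  intro x hx
  rw [interior_Icc] at hx
  rw [(hgder hx.1.le hx.2.le).deriv]
  exact div_pos (Ndpos hx.1.le hx.2) (pow_pos (Dpos hx.1.le hx.2.le) 2)

lemma g0 : gf 0 = 0 := by simp [gf, Nf]

lemma g1 : gf 1 = 1 := by
  rw [gf, N1D1]; exact div_self (ne_of_gt (Dpos (by norm_num) (by norm_num)))

lemma himage : gf '' Ioo 0 1 = Ioo 0 1 := by
  apply Subset.antisymm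
  · rintro _ ⟨v, hv, rfl⟩
    exact ⟨div_pos (Npos hv.1 hv.2.le) (Dpos hv.1.le hv.2.le),
      (div_lt_one (Dpos hv.1.le hv.2.le)).mpr (by linarith [DNpos hv.1.le hv.2])⟩
  · have := intermediate_value_Ioo (by norm_num : (0:ℝ) ≤ 1) gcont
    rw [g0, g1] at this; exact this

lemma hinj : InjOn gf (Ioo 0 1) := (gmono.injOn).mono Ioo_subset_Icc_self


noncomputable def Cr : ℝ := (5/14) * Real.sqrt ((7 + Real.sqrt 21)/3)

lemma Crpos : 0 < Cr := by
  have : (0:ℝ) < (7 + Real.sqrt 21)/3 := by nlinarith [Real.sqrt_nonneg 21]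
  have := Real.sqrt_pos.mpr this
  unfold Cr; nlinarith

lemma hC2 : Cr^2 = 25*(7 + Real.sqrt 21)/588 := by
  have h : (0:ℝ) ≤ (7 + Real.sqrt 21)/3 := by nlinarith [Real.sqrt_nonneg 21]
  rw [Cr, mul_pow, Real.sq_sqrt h]; ring

lemma pointwiseB {v : ℝ} (hv : v ∈ Ioo (0:ℝ) 1) :
    |Nd v / (Df v)^2| * (Real.sqrt (gf v * (1 - gf v) * (1 - k2 * gf v)))⁻¹
      = Cr⁻¹ * (Real.sqrt v * Real.sqrt (Pf v))⁻¹ := by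
  obtain ⟨h0, h1⟩ := hv
  have hN := Npos h0 h1.le
  have hNd := Ndpos h0.le h1
  have hD := Dpos h0.le h1.le
  have hDN := DNpos h0.le h1
  have hP := Ppos h0.le h1.le
  have hd : 0 < Nd v / (Df v)^2 := div_pos hNd (pow_pos hD 2)
  have hgprod : gf v * (1 - gf v) * (1 - k2 * gf v) = Nf v * (Df v - Nf v) / (Df v)^3 := by
    have hDne := ne_of_gt hD
    simp only [gf]
    field_simp
    simp only [Df]; ring
  have hm : 0 < gf v * (1 - gf v) * (1 - k2 * gf v) := by
    rw [hgprod]; positivity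
  rw [abs_of_pos hd]
  apply eq_of_sq
  · exact mul_nonneg hd.le (inv_nonneg.mpr (Real.sqrt_nonneg _))
  · exact mul_nonneg (inv_nonneg.mpr Crpos.le) (inv_nonneg.mpr
      (mul_nonneg (Real.sqrt_nonneg _) (Real.sqrt_nonneg _)))
  have e1 : ((Real.sqrt (gf v * (1 - gf v) * (1 - k2 * gf v)))⁻¹)^2
      = (Nf v * (Df v - Nf v) / (Df v)^3)⁻¹ := by
    rw [inv_pow, Real.sq_sqrt hm.le, hgprod]
  have e2 : ((Real.sqrt v * Real.sqrt (Pf v))⁻¹)^2 = (v * Pf v)⁻¹ := by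
    rw [inv_pow, mul_pow, Real.sq_sqrt h0.le, Real.sq_sqrt hP.le]
  have hC2' : (Cr⁻¹)^2 = (25*(7 + Real.sqrt 21)/588)⁻¹ := by rw [inv_pow, hC2]
  rw [mul_pow, mul_pow, e1, e2, hC2']
  have hcc : (0:ℝ) < 25*(7 + Real.sqrt 21)/588 := by nlinarith [Real.sqrt_nonneg 21]
  rw [div_pow, inv_div, div_mul_div_comm, ← mul_inv, eq_comm, inv_eq_one_div,
    div_eq_div_iff (by positivity) (by positivity)]
  linear_combination (-(Df v)^3) * hkey (v := v)

lemma stepB : ∫ w in Ioo (0:ℝ) 1, (Real.sqrt (w * (1-w) * (1 - k2*w)))⁻¹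
    = Cr⁻¹ * ∫ v in Ioo (0:ℝ) 1, (Real.sqrt v * Real.sqrt (Pf v))⁻¹ := by
  calc ∫ w in Ioo (0:ℝ) 1, (Real.sqrt (w * (1-w) * (1 - k2*w)))⁻¹
      = ∫ w in gf '' Ioo 0 1, (Real.sqrt (w * (1-w) * (1 - k2*w)))⁻¹ := by rw [himage]
    _ = ∫ v in Ioo (0:ℝ) 1, |Nd v / (Df v)^2| • (Real.sqrt (gf v * (1 - gf v) * (1 - k2 * gf v)))⁻¹ :=
        integral_image_eq_integral_abs_deriv_smul measurableSet_Ioo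
          (fun x hx => (hgder hx.1.le hx.2.le).hasDerivWithinAt) hinj _
    _ = ∫ v in Ioo (0:ℝ) 1, Cr⁻¹ * (Real.sqrt v * Real.sqrt (Pf v))⁻¹ := by
        apply setIntegral_congr_fun measurableSet_Ioo
        intro v hv
        simpa using pointwiseB hv
    _ = Cr⁻¹ * ∫ v in Ioo (0:ℝ) 1, (Real.sqrt v * Real.sqrt (Pf v))⁻¹ :=
        MeasureTheory.integral_const_mul _ _


lemma sin_sq_image : (fun θ => Real.sin θ ^ 2) '' Ioo 0 (Real.pi/2) = Ioo (0:ℝ) 1 := by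
  have hpi := Real.pi_pos
  apply Subset.antisymm
  · rintro _ ⟨θ, hθ, rfl⟩
    have hs1 : 0 < Real.sin θ := Real.sin_pos_of_pos_of_lt_pi hθ.1 (by linarith [hθ.2])
    have hs2 : Real.sin θ < 1 := by
      have hθm : θ ∈ Icc (-(Real.pi/2)) (Real.pi/2) := ⟨by linarith [hθ.1], hθ.2.le⟩
      have hpm : Real.pi/2 ∈ Icc (-(Real.pi/2)) (Real.pi/2) := ⟨by linarith, le_refl _⟩
      have := Real.strictMonoOn_sin hθm hpm hθ.2
      rwa [Real.sin_pi_div_two] at this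
    refine ⟨by positivity, ?_⟩
    show Real.sin θ ^ 2 < 1
    nlinarith
  · have hc : ContinuousOn (fun θ => Real.sin θ ^ 2) (Icc 0 (Real.pi/2)) := by
      apply Continuous.continuousOn; continuity
    have := intermediate_value_Ioo (by linarith : (0:ℝ) ≤ Real.pi/2) hc
    simpa [Real.sin_pi_div_two] using this

lemma sin_sq_inj : InjOn (fun θ => Real.sin θ ^ 2) (Ioo 0 (Real.pi/2)) := by
  have hpi := Real.pi_pos
  intro a ha b hb hab
  have h1 : a ∈ Icc (-(Real.pi/2)) (Real.pi/2) := ⟨by linarith [ha.1], le_of_lt ha.2⟩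
  have h2 : b ∈ Icc (-(Real.pi/2)) (Real.pi/2) := ⟨by linarith [hb.1], le_of_lt hb.2⟩
  have hinj := Real.injOn_sin h1 h2
  apply hinj
  have hsa : 0 ≤ Real.sin a := Real.sin_nonneg_of_nonneg_of_le_pi ha.1.le (by linarith [ha.2])
  have hsb : 0 ≤ Real.sin b := Real.sin_nonneg_of_nonneg_of_le_pi hb.1.le (by linarith [hb.2])
  simp only at hab
  exact eq_of_sq hsa hsb hab

lemma sin_sq_deriv (θ : ℝ) : HasDerivAt (fun θ => Real.sin θ ^ 2)
    (2 * Real.sin θ * Real.cos θ) θ := by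
  have := (Real.hasDerivAt_sin θ).pow 2
  refine this.congr_deriv ?_
  push_cast; ring

lemma pointwiseA {θ : ℝ} (hθ : θ ∈ Ioo 0 (Real.pi/2)) :
    |2 * Real.sin θ * Real.cos θ| *
      (Real.sqrt (Real.sin θ ^ 2 * (1 - Real.sin θ ^ 2) * (1 - k2 * Real.sin θ ^ 2)))⁻¹
    = 2 * (1 - k2 * Real.sin θ ^ 2) ^ (-(1:ℝ)/2) := by
  have hpi := Real.pi_pos
  have hs1 : 0 < Real.sin θ := Real.sin_pos_of_pos_of_lt_pi hθ.1 (by linarith [hθ.2])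
  have hc1 : 0 < Real.cos θ := Real.cos_pos_of_mem_Ioo ⟨by linarith [hθ.1], hθ.2⟩
  have hsle : Real.sin θ ^ 2 ≤ 1 := Real.sin_sq_le_one θ
  have hk0 := k2pos
  have hk1 := k2lt1
  have hm : 0 < 1 - k2 * Real.sin θ ^ 2 := by nlinarith
  have hcs : 1 - Real.sin θ ^ 2 = Real.cos θ ^ 2 := by
    have := Real.sin_sq_add_cos_sq θ; linarith
  rw [hcs, abs_of_pos (by positivity)]
  rw [Real.sqrt_mul (by positivity), Real.sqrt_mul (by positivity),
    Real.sqrt_sq hs1.le, Real.sqrt_sq hc1.le, rpow_neg_half hm.le]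
  field_simp

lemma stepA : ellipticK ((1/7) * Real.sqrt ((49 - 9 * Real.sqrt 21) / 2))
    = (1/2) * ∫ w in Ioo (0:ℝ) 1, (Real.sqrt (w * (1-w) * (1 - k2*w)))⁻¹ := by
  have hpi := Real.pi_pos
  have hk2 : ((1/7) * Real.sqrt ((49 - 9 * Real.sqrt 21) / 2))^2 = k2 := by
    have h9 : (0:ℝ) ≤ (49 - 9 * Real.sqrt 21)/2 := by nlinarith [s_ub]
    rw [mul_pow, Real.sq_sqrt h9, k2]; ring
  have key : ∫ w in Ioo (0:ℝ) 1, (Real.sqrt (w * (1-w) * (1 - k2*w)))⁻¹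
      = 2 * ∫ θ in Ioo (0:ℝ) (Real.pi/2), (1 - k2 * Real.sin θ ^ 2) ^ (-(1:ℝ)/2) := by
    calc ∫ w in Ioo (0:ℝ) 1, (Real.sqrt (w * (1-w) * (1 - k2*w)))⁻¹
        = ∫ w in (fun θ => Real.sin θ ^ 2) '' Ioo 0 (Real.pi/2),
            (Real.sqrt (w * (1-w) * (1 - k2*w)))⁻¹ := by rw [sin_sq_image]
      _ = ∫ θ in Ioo (0:ℝ) (Real.pi/2), |2 * Real.sin θ * Real.cos θ| •
            (Real.sqrt (Real.sin θ ^ 2 * (1 - Real.sin θ ^ 2) * (1 - k2 * Real.sin θ ^ 2)))⁻¹ :=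
          integral_image_eq_integral_abs_deriv_smul measurableSet_Ioo
            (fun x _ => (sin_sq_deriv x).hasDerivWithinAt) sin_sq_inj _
      _ = ∫ θ in Ioo (0:ℝ) (Real.pi/2), 2 * (1 - k2 * Real.sin θ ^ 2) ^ (-(1:ℝ)/2) := by
          apply setIntegral_congr_fun measurableSet_Ioo
          intro θ hθ
          simpa using pointwiseA hθ
      _ = 2 * ∫ θ in Ioo (0:ℝ) (Real.pi/2), (1 - k2 * Real.sin θ ^ 2) ^ (-(1:ℝ)/2) :=
          MeasureTheory.integral_const_mul _ _
  rw [key]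
  rw [ellipticK]
  simp only [hk2]
  rw [intervalIntegral.integral_of_le (by linarith), MeasureTheory.integral_Ioc_eq_integral_Ioo]
  ring


lemma pointwiseT {u : ℝ} (hu : u ∈ Ioo (0:ℝ) 1) :
    u ^ (-(1:ℝ)/2) * ((1 - (3*Real.sqrt 21 - 17)/25 * u) ^ (-(1:ℝ)/2) *
      ((1 - (3 - Real.sqrt 21)/12 * u) ^ (-(1:ℝ)/2) *
      ((1 - (Real.sqrt 21 - 3)/3 * u) ^ (-(1:ℝ)/2) *
       (1 - (11 - Real.sqrt 21)/25 * u) ^ (-(1:ℝ)/2))))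
    = (Real.sqrt u * Real.sqrt (Pf u))⁻¹ := by
  obtain ⟨h0, h1⟩ := hu
  have l := s_lb; have hub := s_ub
  have f1 : 0 < 1 - (3*Real.sqrt 21 - 17)/25 * u := by nlinarith
  have f2 : 0 < 1 - (3 - Real.sqrt 21)/12 * u := by nlinarith
  have f3 : 0 < 1 - (Real.sqrt 21 - 3)/3 * u := by nlinarith
  have f4 : 0 < 1 - (11 - Real.sqrt 21)/25 * u := by nlinarith
  rw [rpow_neg_half h0.le, rpow_neg_half f1.le, rpow_neg_half f2.le,
    rpow_neg_half f3.le, rpow_neg_half f4.le, Pf,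
    Real.sqrt_mul f1.le, Real.sqrt_mul f2.le, Real.sqrt_mul f3.le]
  rw [mul_inv, mul_inv, mul_inv, mul_inv]

lemma stepT : (∫ u in (0:ℝ)..1, u ^ (-(1:ℝ)/2) *
      ((1 - (3*Real.sqrt 21 - 17)/25 * u) ^ (-(1:ℝ)/2) *
      ((1 - (3 - Real.sqrt 21)/12 * u) ^ (-(1:ℝ)/2) *
      ((1 - (Real.sqrt 21 - 3)/3 * u) ^ (-(1:ℝ)/2) *
       (1 - (11 - Real.sqrt 21)/25 * u) ^ (-(1:ℝ)/2)))))
    = ∫ v in Ioo (0:ℝ) 1, (Real.sqrt v * Real.sqrt (Pf v))⁻¹ := by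
  rw [intervalIntegral.integral_of_le (by norm_num : (0:ℝ) ≤ 1),
    MeasureTheory.integral_Ioc_eq_integral_Ioo]
  exact setIntegral_congr_fun measurableSet_Ioo (fun u hu => pointwiseT hu)

theorem main_real : (5/14) * Real.sqrt (7/3 + Real.sqrt (7/3)) *
    ellipticK ((1/7) * Real.sqrt ((49 - 9 * Real.sqrt 21) / 2))
    = (1/2) * ∫ u in (0:ℝ)..1, u ^ (-(1:ℝ)/2) *
      ((1 - (3*Real.sqrt 21 - 17)/25 * u) ^ (-(1:ℝ)/2) *
      ((1 - (3 - Real.sqrt 21)/12 * u) ^ (-(1:ℝ)/2) *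
      ((1 - (Real.sqrt 21 - 3)/3 * u) ^ (-(1:ℝ)/2) *
       (1 - (11 - Real.sqrt 21)/25 * u) ^ (-(1:ℝ)/2)))) := by
  have hCr : (5:ℝ)/14 * Real.sqrt (7/3 + Real.sqrt (7/3)) = Cr := by
    rw [Cr]
    congr 1
    have h1 : Real.sqrt ((7:ℝ)/3) = Real.sqrt 21 / 3 := by
      rw [show (7:ℝ)/3 = 21/9 by norm_num, Real.sqrt_div (by norm_num : (0:ℝ) ≤ 21),
        show (9:ℝ) = 3^2 by norm_num, Real.sqrt_sq (by norm_num : (0:ℝ) ≤ 3)]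
    rw [h1]; ring
  rw [hCr, stepA, stepT, stepB]
  have hfin : ∀ X : ℝ, Cr * ((1/2) * (Cr⁻¹ * X)) = (1/2) * X := fun X => by
    linear_combination ((1/2)*X) * mul_inv_cancel₀ (ne_of_gt Crpos)
  exact hfin _


lemma gamma_factor : Complex.Gamma (3/2) / (Complex.Gamma (1/2) * Complex.Gamma ((3:ℂ)/2 - 1/2))
    = 1/2 := by
  have h32 : (3/2 : ℂ) = 1/2 + 1 := by norm_num
  have hne : Complex.Gamma (1/2) ≠ 0 := by
    rw [Complex.Gamma_one_half_eq]
    rw [Ne, Complex.cpow_eq_zero_iff]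
    push_neg
    intro h
    exact absurd h (Complex.ofReal_ne_zero.mpr (ne_of_gt Real.pi_pos))
  rw [show ((3:ℂ)/2 - 1/2) = 1 by norm_num, Complex.Gamma_one, h32,
    Complex.Gamma_add_one _ (by norm_num : (1/2:ℂ) ≠ 0)]
  field_simp

lemma int_eq : (∫ u in (0:ℝ)..1, (u : ℂ) ^ ((1:ℂ)/2 - 1) * ((1 : ℂ) - u) ^ ((3:ℂ)/2 - (1:ℂ)/2 - 1) *
      ∏ k, ((1 : ℂ) - ![(((3 * Real.sqrt 21 - 17) / 25 : ℝ) : ℂ), (((3 - Real.sqrt 21) / 12 : ℝ) : ℂ),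
          (((Real.sqrt 21 - 3) / 3 : ℝ) : ℂ), (((11 - Real.sqrt 21) / 25 : ℝ) : ℂ)] k * u) ^ (-(1/2 : ℂ)))
    = ((∫ u in (0:ℝ)..1, u ^ (-(1:ℝ)/2) *
      ((1 - (3*Real.sqrt 21 - 17)/25 * u) ^ (-(1:ℝ)/2) *
      ((1 - (3 - Real.sqrt 21)/12 * u) ^ (-(1:ℝ)/2) *
      ((1 - (Real.sqrt 21 - 3)/3 * u) ^ (-(1:ℝ)/2) *
       (1 - (11 - Real.sqrt 21)/25 * u) ^ (-(1:ℝ)/2)))) : ℝ) : ℂ) := by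
  rw [← intervalIntegral.integral_ofReal]
  apply intervalIntegral.integral_congr
  intro u hu
  rw [Set.uIcc_of_le (by norm_num : (0:ℝ) ≤ 1)] at hu
  obtain ⟨h0, h1⟩ := hu
  have l := s_lb; have hub := s_ub
  have f1 : 0 ≤ 1 - (3*Real.sqrt 21 - 17)/25 * u := by nlinarith
  have f2 : 0 ≤ 1 - (3 - Real.sqrt 21)/12 * u := by nlinarith
  have f3 : 0 ≤ 1 - (Real.sqrt 21 - 3)/3 * u := by nlinarith
  have f4 : 0 ≤ 1 - (11 - Real.sqrt 21)/25 * u := by nlinarith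
  simp only [Fin.prod_univ_four, Matrix.cons_val_zero, Matrix.cons_val_one, Matrix.head_cons,
    Matrix.cons_val_two, Matrix.tail_cons, Matrix.cons_val_three]
  have c1 : (1 : ℂ) - (((3 * Real.sqrt 21 - 17) / 25 : ℝ) : ℂ) * (u:ℂ)
      = (((1 - (3*Real.sqrt 21 - 17)/25 * u : ℝ)) : ℂ) := by push_cast; ring
  have c2 : (1 : ℂ) - (((3 - Real.sqrt 21) / 12 : ℝ) : ℂ) * (u:ℂ)
      = (((1 - (3 - Real.sqrt 21)/12 * u : ℝ)) : ℂ) := by push_cast; ring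
  have c3 : (1 : ℂ) - (((Real.sqrt 21 - 3) / 3 : ℝ) : ℂ) * (u:ℂ)
      = (((1 - (Real.sqrt 21 - 3)/3 * u : ℝ)) : ℂ) := by push_cast; ring
  have c4 : (1 : ℂ) - (((11 - Real.sqrt 21) / 25 : ℝ) : ℂ) * (u:ℂ)
      = (((1 - (11 - Real.sqrt 21)/25 * u : ℝ)) : ℂ) := by push_cast; ring
  have hexp : (-(1/2) : ℂ) = ((-(1:ℝ)/2 : ℝ) : ℂ) := by push_cast; norm_num
  have hexp2 : ((1:ℂ)/2 - 1) = ((-(1:ℝ)/2 : ℝ) : ℂ) := by push_cast; norm_num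
  have hexp0 : ((3:ℂ)/2 - (1:ℂ)/2 - 1) = 0 := by norm_num
  rw [c1, c2, c3, c4, hexp, hexp2, hexp0, Complex.cpow_zero, mul_one,
    ← Complex.ofReal_cpow h0, ← Complex.ofReal_cpow f1, ← Complex.ofReal_cpow f2,
    ← Complex.ofReal_cpow f3, ← Complex.ofReal_cpow f4]
  push_cast
  ring

end HermiteAux

theorem hermite_genus2_value :
    (((5/14) * Real.sqrt (7/3 + Real.sqrt (7/3)) *
        ellipticK ((1/7) * Real.sqrt ((49 - 9 * Real.sqrt 21) / 2)) : ℝ) : ℂ) =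
      lauricellaFD 4 (1/2) (fun _ => (1/2 : ℂ)) (3/2)
        ![((3 * Real.sqrt 21 - 17) / 25 : ℝ), ((3 - Real.sqrt 21) / 12 : ℝ),
          ((Real.sqrt 21 - 3) / 3 : ℝ), ((11 - Real.sqrt 21) / 25 : ℝ)] := by
  simp only [lauricellaFD]
  rw [HermiteAux.gamma_factor, HermiteAux.int_eq]
  rw [HermiteAux.main_real]
  push_cast
  ring
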